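/- Let H be a 3-uniform hypergraph with no linear cycle, let abc be a thick hyperedge of H, and suppose no vertex is strongly associated to abc. Then there exist three distinct vertices v_1, v_2, v_3 outside {a,b,c} with v_1ab, v_2bc, v_3ca ∈ E(H), which form a linear cycle — a contradiction. Hence every thick hyperedge of a linear-cycle-free hypergraph has at least one vertex strongly associated to it. -/
import Mathlib


/-- A linear cycle of length `k ≥ 3` in a 3-uniform hypergraph with edge set `E`:
an alternating cyclic sequence of distinct vertices `v i` and distinct hyperedges `h i`
with `h i ∩ h (i+1) = {v (i+1)}` and non-consecutive hyperedges disjoint. -/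
def IsLinearCycle {V : Type*} [DecidableEq V] (E : Finset (Finset V)) (k : ℕ)
    (v : ZMod k → V) (h : ZMod k → Finset V) : Prop :=
  3 ≤ k ∧ Function.Injective v ∧ Function.Injective h ∧
    (∀ i, h i ∈ E) ∧ (∀ i, h i ∩ h (i + 1) = {v (i + 1)}) ∧
    (∀ i j, i ≠ j → i + 1 ≠ j → j + 1 ≠ i → h i ∩ h j = ∅)

/-- `E` contains a linear cycle. -/
def HasLinearCycle {V : Type*} [DecidableEq V] (E : Finset (Finset V)) : Prop :=
  ∃ (k : ℕ) (v : ZMod k → V) (h : ZMod k → Finset V), IsLinearCycle E k v h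

/-- The degree of a vertex: the number of hyperedges containing it. -/
def hDegree {V : Type*} [DecidableEq V] (E : Finset (Finset V)) (v : V) : ℕ :=
  (E.filter (fun e => v ∈ e)).card

/-- The support of a vertex `v` in a hyperedge `h`: the pairs of `h` that form a
hyperedge together with `v`. -/
def hSupport {V : Type*} [DecidableEq V] (E : Finset (Finset V)) (h : Finset V) (v : V) :
    Finset (Finset V) :=
  (h.powersetCard 2).filter (fun p => insert v p ∈ E)

/-- A pair of vertices is thick if at least two hyperedges contain it. -/
def ThickPair {V : Type*} [DecidableEq V] (E : Finset (Finset V)) (a b : V) : Prop :=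
  2 ≤ (E.filter (fun e => a ∈ e ∧ b ∈ e)).card

/-- A hyperedge is thick if each of its pairs is contained in at least two hyperedges. -/
def ThickEdge {V : Type*} [DecidableEq V] (E : Finset (Finset V)) (h : Finset V) : Prop :=
  ∀ p ∈ h.powersetCard 2, 2 ≤ (E.filter (fun e => p ⊆ e)).card

/-- `v ∉ h` is strongly associated to the hyperedge `h` if at least two of the 3-sets
formed by `v` and a pair of `h` are hyperedges. -/
def StronglyAssoc {V : Type*} [DecidableEq V] (E : Finset (Finset V)) (h : Finset V) (v : V) :
    Prop :=
  v ∉ h ∧ 2 ≤ (hSupport E h v).card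

/-- A linear path of length `k` (given by its sequence of hyperedges): consecutive
hyperedges meet in exactly one vertex, non-consecutive ones are disjoint. -/
def IsLinearPath {V : Type*} [DecidableEq V] (E : Finset (Finset V)) (k : ℕ)
    (h : Fin k → Finset V) : Prop :=
  Function.Injective h ∧ (∀ i, h i ∈ E) ∧
    (∀ i j : Fin k, (i : ℕ) + 1 = (j : ℕ) → (h i ∩ h j).card = 1) ∧
    (∀ i j : Fin k, (i : ℕ) + 2 ≤ (j : ℕ) → h i ∩ h j = ∅)

/-- A linear tree with vertex set `S` and edge set `T`: built from a single vertex by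
repeatedly adding hyperedges meeting the current vertex set in exactly one vertex. -/
inductive IsLinearTree {V : Type*} [DecidableEq V] : Finset V → Finset (Finset V) → Prop
  | single (v : V) : IsLinearTree {v} ∅
  | extend {S : Finset V} {T : Finset (Finset V)} (e : Finset V) :
      IsLinearTree S T → e.card = 3 → (e ∩ S).card = 1 → IsLinearTree (S ∪ e) (insert e T)

/-- Every thick hyperedge of a linear-cycle-free 3-uniform hypergraph has a vertex
strongly associated to it. -/

lemma exists_other {V : Type*} [DecidableEq V] (E : Finset (Finset V))
    (h3 : ∀ e ∈ E, e.card = 3) (u w t : V) (huw : u ≠ w)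
    (hth : 2 ≤ (E.filter (fun e => ({u, w} : Finset V) ⊆ e)).card) :
    ∃ x, x ≠ u ∧ x ≠ w ∧ x ≠ t ∧ ({x, u, w} : Finset V) ∈ E := by
  obtain ⟨e, he, hne⟩ := Finset.exists_mem_ne (s := E.filter (fun e => ({u, w} : Finset V) ⊆ e)) (by omega) ({u, w, t} : Finset V)
  rw [Finset.mem_filter] at he
  obtain ⟨heE, hsub⟩ := he
  have hce : e.card = 3 := h3 e heE
  have hcuw : ({u, w} : Finset V).card = 2 := by
    rw [Finset.card_insert_of_notMem (by simpa using huw), Finset.card_singleton]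
  have hlt : ({u, w} : Finset V).card < e.card := by omega
  have hss : ({u, w} : Finset V) ⊂ e := Finset.ssubset_iff_subset_ne.2 ⟨hsub, by
    intro h; rw [← h] at hce; omega⟩
  obtain ⟨x, hxe, hxuw⟩ := Finset.exists_of_ssubset hss
  simp only [Finset.mem_insert, Finset.mem_singleton, not_or] at hxuw
  obtain ⟨hxu, hxw⟩ := hxuw
  have hxuwsub : ({x, u, w} : Finset V) ⊆ e := by
    intro y hy
    simp only [Finset.mem_insert, Finset.mem_singleton] at hy
    rcases hy with rfl | rfl | rfl
    · exact hxe
    · exact hsub (by simp)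
    · exact hsub (by simp)
  have hcard : ({x, u, w} : Finset V).card = 3 := by
    rw [Finset.card_insert_of_notMem (by simp [hxu, hxw]),
      Finset.card_insert_of_notMem (by simpa using huw), Finset.card_singleton]
  have heq : ({x, u, w} : Finset V) = e :=
    Finset.eq_of_subset_of_card_le hxuwsub (by omega)
  refine ⟨x, hxu, hxw, ?_, heq ▸ heE⟩
  rintro rfl
  apply hne
  rw [← heq]
  ext y; simp; tauto

lemma strong_of_two {V : Type*} [DecidableEq V] (E : Finset (Finset V)) (s : Finset V) (v : V)
    (hv : v ∉ s) (p q : Finset V) (hp : p ⊆ s) (hq : q ⊆ s) (hpc : p.card = 2)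
    (hqc : q.card = 2) (hpq : p ≠ q) (h1 : insert v p ∈ E) (h2 : insert v q ∈ E) :
    StronglyAssoc E s v := by
  refine ⟨hv, ?_⟩
  have hsub : ({p, q} : Finset (Finset V)) ⊆ hSupport E s v := by
    intro r hr
    rcases Finset.mem_insert.1 hr with rfl | hr
    · simp [hSupport, Finset.mem_filter, Finset.mem_powersetCard, hp, hpc, h1]
    · rw [Finset.mem_singleton] at hr; subst hr
      simp [hSupport, Finset.mem_filter, Finset.mem_powersetCard, hq, hqc, h2]
  calc 2 = ({p, q} : Finset (Finset V)).card := by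
        rw [Finset.card_insert_of_notMem (by simpa using hpq), Finset.card_singleton]
    _ ≤ _ := Finset.card_le_card hsub

lemma inter3 {V : Type*} [DecidableEq V] {x a b y c : V}
    (h1 : x ≠ y) (h2 : x ≠ b) (h3 : x ≠ c) (h4 : a ≠ y) (h5 : a ≠ b) (h6 : a ≠ c) :
    ({x, a, b} : Finset V) ∩ {y, b, c} = {b} := by
  ext w
  simp only [Finset.mem_inter, Finset.mem_insert, Finset.mem_singleton]
  constructor
  · rintro ⟨rfl | rfl | rfl, h⟩ <;> tauto
  · rintro rfl; tauto

set_option maxHeartbeats 2000000 in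
theorem thick_has_strongly_assoc {V : Type*} [DecidableEq V] (E : Finset (Finset V))
    (h3 : ∀ e ∈ E, e.card = 3) (hcyc : ¬ HasLinearCycle E) (a b c : V)
    (habc : ({a, b, c} : Finset V) ∈ E) (hthick : ThickEdge E {a, b, c}) :
    ∃ v : V, StronglyAssoc E {a, b, c} v := by
  have hc3 : ({a, b, c} : Finset V).card = 3 := h3 _ habc
  have hle : ∀ u w : V, ({u, w} : Finset V).card ≤ 2 :=
    fun u w => (Finset.card_insert_le _ _).trans (by simp)
  have hab : a ≠ b := by
    rintro rfl
    have h2 : ({a, a, c} : Finset V).card ≤ ({a, c} : Finset V).card :=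
      Finset.card_le_card (by intro w hw; simp at hw ⊢; tauto)
    have h4 := hle a c; omega
  have hbc : b ≠ c := by
    rintro rfl
    have h2 : ({a, b, b} : Finset V).card ≤ ({a, b} : Finset V).card :=
      Finset.card_le_card (by intro w hw; simp at hw ⊢; tauto)
    have h4 := hle a b; omega
  have hac : a ≠ c := by
    rintro rfl
    have h2 : ({a, b, a} : Finset V).card ≤ ({a, b} : Finset V).card :=
      Finset.card_le_card (by intro w hw; simp at hw ⊢; tauto)
    have h4 := hle a b; omega
  have pair_card : ∀ u w : V, u ≠ w → ({u, w} : Finset V).card = 2 := by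
    intro u w huw
    rw [Finset.card_insert_of_notMem (by simpa using huw), Finset.card_singleton]
  have hpab : ({a, b} : Finset V) ∈ ({a, b, c} : Finset V).powersetCard 2 := by
    rw [Finset.mem_powersetCard]
    exact ⟨by intro x hx; simp at hx ⊢; tauto, pair_card a b hab⟩
  have hpbc : ({b, c} : Finset V) ∈ ({a, b, c} : Finset V).powersetCard 2 := by
    rw [Finset.mem_powersetCard]
    exact ⟨by intro x hx; simp at hx ⊢; tauto, pair_card b c hbc⟩
  have hpca : ({c, a} : Finset V) ∈ ({a, b, c} : Finset V).powersetCard 2 := by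
    rw [Finset.mem_powersetCard]
    exact ⟨by intro x hx; simp at hx ⊢; tauto, pair_card c a (Ne.symm hac)⟩
  obtain ⟨x, hxa, hxb, hxc, hex⟩ := exists_other E h3 a b c hab (hthick _ hpab)
  obtain ⟨y, hyb, hyc, hya, hey⟩ := exists_other E h3 b c a hbc (hthick _ hpbc)
  obtain ⟨z, hzc, hza, hzb, hez⟩ := exists_other E h3 c a b (Ne.symm hac) (hthick _ hpca)
  have hxm : x ∉ ({a, b, c} : Finset V) := by simp [hxa, hxb, hxc]
  have hym : y ∉ ({a, b, c} : Finset V) := by simp [hya, hyb, hyc]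
  by_cases hxy : x = y
  · subst hxy
    exact ⟨x, strong_of_two E _ x hxm {a, b} {b, c}
      (by intro w hw; simp at hw ⊢; tauto) (by intro w hw; simp at hw ⊢; tauto)
      (pair_card a b hab) (pair_card b c hbc)
      (by intro h; have : a ∈ ({b, c} : Finset V) := h ▸ (by simp); simp at this; tauto)
      hex hey⟩
  by_cases hxz : x = z
  · subst hxz
    exact ⟨x, strong_of_two E _ x hxm {a, b} {c, a}
      (by intro w hw; simp at hw ⊢; tauto) (by intro w hw; simp at hw ⊢; tauto)
      (pair_card a b hab) (pair_card c a (Ne.symm hac))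
      (by intro h; have : b ∈ ({c, a} : Finset V) := h ▸ (by simp); simp at this; tauto)
      hex hez⟩
  by_cases hyz : y = z
  · subst hyz
    exact ⟨y, strong_of_two E _ y hym {b, c} {c, a}
      (by intro w hw; simp at hw ⊢; tauto) (by intro w hw; simp at hw ⊢; tauto)
      (pair_card b c hbc) (pair_card c a (Ne.symm hac))
      (by intro h; have : b ∈ ({c, a} : Finset V) := h ▸ (by simp); simp at this; tauto)
      hey hez⟩
  -- build a linear cycle of length 3, contradiction
  exfalso
  apply hcyc
  have hba := hab.symm; have hcb := hbc.symm; have hca := hac.symm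
  have hax := hxa.symm; have hbx := hxb.symm; have hcx := hxc.symm
  have hay := hya.symm; have hby := hyb.symm; have hcy := hyc.symm
  have haz := hza.symm; have hbz := hzb.symm; have hcz := hzc.symm
  have hyx : ¬ y = x := fun h => hxy h.symm
  have hzx : ¬ z = x := fun h => hxz h.symm
  have hzy : ¬ z = y := fun h => hyz h.symm
  have h01 : ({x, a, b} : Finset V) ∩ {y, b, c} = {b} := inter3 hxy hxb hxc hay hab hac
  have h12 : ({y, b, c} : Finset V) ∩ {z, c, a} = {c} := inter3 hyz hyc hya hbz hbc hba
  have h20 : ({z, c, a} : Finset V) ∩ {x, a, b} = {a} := inter3 hzx hza hzb hcx hca hcb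
  have hne01 : ({x, a, b} : Finset V) ≠ {y, b, c} := by
    intro h
    have : a ∈ ({y, b, c} : Finset V) := h ▸ (by simp)
    simp at this; tauto
  have hne02 : ({x, a, b} : Finset V) ≠ {z, c, a} := by
    intro h
    have : b ∈ ({z, c, a} : Finset V) := h ▸ (by simp)
    simp at this; tauto
  have hne12 : ({y, b, c} : Finset V) ≠ {z, c, a} := by
    intro h
    have : b ∈ ({z, c, a} : Finset V) := h ▸ (by simp)
    simp at this; tauto
  have hne10 : ({y, b, c} : Finset V) ≠ {x, a, b} := fun h => hne01 h.symm
  have hne20 : ({z, c, a} : Finset V) ≠ {x, a, b} := fun h => hne02 h.symm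
  have hne21 : ({z, c, a} : Finset V) ≠ {y, b, c} := fun h => hne12 h.symm
  have hcases : ∀ i : ZMod 3, i = 0 ∨ i = 1 ∨ i = 2 := by decide
  refine ⟨3, (fun i : ZMod 3 => if i = 0 then a else if i = 1 then b else c),
    (fun i : ZMod 3 => if i = 0 then ({x, a, b} : Finset V)
      else if i = 1 then {y, b, c} else {z, c, a}), le_refl 3, ?_, ?_, ?_, ?_, ?_⟩
  · intro i j hij
    rcases hcases i with rfl | rfl | rfl <;> rcases hcases j with rfl | rfl | rfl <;>
      first
        | rfl
        | exact absurd hij hab | exact absurd hij hac | exact absurd hij hbc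
        | exact absurd hij hba | exact absurd hij hca | exact absurd hij hcb
  · intro i j hij
    rcases hcases i with rfl | rfl | rfl <;> rcases hcases j with rfl | rfl | rfl <;>
      first
        | rfl
        | exact absurd hij hne01 | exact absurd hij hne02 | exact absurd hij hne12
        | exact absurd hij hne10 | exact absurd hij hne20 | exact absurd hij hne21
  · intro i
    rcases hcases i with rfl | rfl | rfl
    · exact hex
    · exact hey
    · exact hez
  · intro i
    rcases hcases i with rfl | rfl | rfl
    · exact h01
    · exact h12
    · exact h20
  · intro i j h1 h2 h3'
    exfalso
    revert h1 h2 h3'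
    rcases hcases i with rfl | rfl | rfl <;> rcases hcases j with rfl | rfl | rfl <;> decide
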